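/- Let κ be an infinite regular cardinal, let S ⊆ S^{κ⁺}_κ be a set that contains a κ-club, and let T be any set of functions from ordinals below κ⁺ to κ⁺, ordered by proper end-extension. If there exists an order-preserving function f from T(S) to T (i.e., s ⊊ t implies f(s) ⊊ f(t) for all s, t ∈ T(S)), then T contains a chain of cardinality κ⁺. -/

import Mathlib

open Set Cardinal

/-- The set `S^{κ⁺}_κ` of ordinals below `κ⁺` of cofinality `κ`. -/
def SCof (κ : Cardinal.{0}) : Set Ordinal.{0} :=
  {γ | γ < (Order.succ κ).ord ∧ γ.cof = κ}

/-- `C` is a `κ`-club in `κ⁺`: it is an unbounded subset of `κ⁺` containing all of its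
limit points (below `κ⁺`) of cofinality `κ`. -/
def IsKappaClub (κ : Cardinal.{0}) (C : Set Ordinal.{0}) : Prop :=
  C ⊆ Set.Iio (Order.succ κ).ord ∧
  (∀ α < (Order.succ κ).ord, ∃ β ∈ C, α < β) ∧
  (∀ α < (Order.succ κ).ord, α.cof = κ →
    (∀ β < α, ∃ γ ∈ C, β < γ ∧ γ < α) → α ∈ C)

/-- `g` (a set of pairs, i.e. the graph of a function) is a function from an ordinal
below `κ⁺` to `κ⁺`. -/
def IsOrdFun (κ : Cardinal.{0}) (g : Set (Ordinal.{0} × Ordinal.{0})) : Prop :=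
  ∃ d < (Order.succ κ).ord,
    (∀ x ∈ g, x.1 < d ∧ x.2 < (Order.succ κ).ord) ∧
    (∀ ξ < d, ∃! β, (ξ, β) ∈ g)

/-- The tree `T(S)`, whose nodes are (graphs of) strictly increasing functions from a
successor ordinal below `κ⁺` into `S` that are continuous at all points of cofinality
`κ` in their domain; the tree ordering is end-extension, i.e. inclusion of graphs. -/
def TStree (κ : Cardinal.{0}) (S : Set Ordinal.{0}) :
    Set (Set (Ordinal.{0} × Ordinal.{0})) :=
  {g | ∃ d, d < (Order.succ κ).ord ∧ (∃ e, d = Order.succ e) ∧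
    (∀ x ∈ g, x.1 < d) ∧ (∀ ξ < d, ∃! β, (ξ, β) ∈ g) ∧
    (∀ x ∈ g, x.2 ∈ S) ∧
    (∀ ξ β η β', (ξ, β) ∈ g → (η, β') ∈ g → ξ < η → β < β') ∧
    (∀ ξ β, (ξ, β) ∈ g → ξ.cof = κ → β = sSup {β' | ∃ η < ξ, (η, β') ∈ g})}

namespace Statement6Aux

/-- The cofinality of the supremum of a strictly monotone image of `Iio ξ`
equals the cofinality of the limit ordinal `ξ`. -/
lemma cof_sSup_image {e : Ordinal.{0} → Ordinal.{0}} (he : StrictMono e)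
    {ξ : Ordinal.{0}} (hξ : Order.IsSuccLimit ξ) :
    (sSup (e '' Iio ξ)).cof = ξ.cof := by
  set s := sSup (e '' Iio ξ) with hs
  have hne : (e '' Iio ξ).Nonempty := ⟨e 0, 0, hξ.pos, rfl⟩
  have hbdd : BddAbove (e '' Iio ξ) := Ordinal.bddAbove_of_small
  have hmem : ∀ η < ξ, e η ≤ s := fun η hη => le_csSup hbdd ⟨η, hη, rfl⟩
  have hlt : ∀ η < ξ, e η < s := fun η hη =>
    (he (Order.lt_succ η)).trans_le (hmem _ (hξ.succ_lt hη))
  apply le_antisymm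
  · -- cof s ≤ cof ξ
    obtain ⟨f0, hf0⟩ := Ordinal.exists_fundamental_sequence ξ
    have hone : Nonempty (ξ.cof.ord).ToType := by
      rw [Ordinal.toType_nonempty_iff_ne_zero]
      have h0 : ℵ₀ ≤ ξ.cof := Ordinal.aleph0_le_cof.2 hξ
      intro hz
      have : ξ.cof = 0 := Cardinal.ord_eq_zero.1 hz
      rw [this] at h0
      exact absurd (le_zero_iff.1 h0) Cardinal.aleph0_ne_zero
    let F : (ξ.cof.ord).ToType → Ordinal.{0} := fun i =>
      e (f0 ((Ordinal.ToType.mk (o := ξ.cof.ord)).symm i)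
        ((Ordinal.ToType.mk (o := ξ.cof.ord)).symm i).2)
    have hFs : ∀ i, F i < s := fun i => hlt _ (hf0.lt _)
    have hsup : iSup F = s := by
      apply le_antisymm
      · exact ciSup_le fun i => (hFs i).le
      · refine csSup_le hne ?_
        rintro _ ⟨η, hη, rfl⟩
        have hblt : η < Ordinal.blsub ξ.cof.ord f0 := by rw [hf0.blsub_eq]; exact hη
        obtain ⟨i, hi, hle⟩ := Ordinal.lt_blsub_iff.1 hblt
        calc e η ≤ e (f0 i hi) := he.monotone hle
          _ = F ((Ordinal.ToType.mk (o := ξ.cof.ord)) ⟨i, hi⟩) := by simp [F]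
          _ ≤ iSup F := le_ciSup (Ordinal.bddAbove_range _) _
    calc s.cof = (iSup F).cof := by rw [hsup]
      _ ≤ #(ξ.cof.ord).ToType := Ordinal.cof_iSup_le (fun i => by rw [hsup]; exact hFs i)
      _ = ξ.cof := by rw [Cardinal.mk_toType, Cardinal.card_ord]
  · -- cof ξ ≤ cof s
    obtain ⟨f1, hf1⟩ := Ordinal.exists_fundamental_sequence s
    have hch : ∀ i : Iio (s.cof.ord), ∃ η < ξ, f1 i i.2 < e η := by
      intro i
      have h1 : f1 i i.2 < s := hf1.lt _
      obtain ⟨_, ⟨η, hη, rfl⟩, hgt⟩ := exists_lt_of_lt_csSup hne h1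
      exact ⟨η, hη, hgt⟩
    choose η hηξ hηgt using hch
    let H : (s.cof.ord).ToType → Ordinal.{0} := fun i =>
      η ((Ordinal.ToType.mk (o := s.cof.ord)).symm i)
    have hHξ : Ordinal.lsub H = ξ := by
      apply le_antisymm
      · exact Ordinal.lsub_le fun i => hηξ _
      · by_contra hcon
        push_neg at hcon
        have h2 : e (Ordinal.lsub H) < Ordinal.blsub s.cof.ord f1 := by
          rw [hf1.blsub_eq]; exact hlt _ hcon
        obtain ⟨i, hi, hle⟩ := Ordinal.lt_blsub_iff.1 h2
        have h3 : e (Ordinal.lsub H) < e (η ⟨i, hi⟩) := hle.trans_lt (hηgt ⟨i, hi⟩)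
        have h4 : Ordinal.lsub H < η ⟨i, hi⟩ := he.lt_iff_lt.1 h3
        have h5 : η ⟨i, hi⟩ < Ordinal.lsub H := by
          have := Ordinal.lt_lsub H ((Ordinal.ToType.mk (o := s.cof.ord)) ⟨i, hi⟩)
          simpa [H] using this
        exact absurd (h4.trans h5) (lt_irrefl _)
    calc ξ.cof = (Ordinal.lsub H).cof := by rw [hHξ]
      _ ≤ #(s.cof.ord).ToType := Ordinal.cof_lsub_le H
      _ = s.cof := by rw [Cardinal.mk_toType, Cardinal.card_ord]

end Statement6Aux

/-- If `S ⊆ S^{κ⁺}_κ` contains a `κ`-club and there is an order-preserving function `f`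
from `T(S)` into a set `T` of functions from ordinals below `κ⁺` to `κ⁺` (ordered by
proper end-extension, i.e. proper inclusion of graphs), then `T` contains a chain of
cardinality `κ⁺`. -/
theorem statement6 (κ : Cardinal.{0}) (hκ : ℵ₀ ≤ κ) (hreg : κ.IsRegular)
    (S : Set Ordinal.{0}) (hS : S ⊆ SCof κ)
    (hclub : ∃ C : Set Ordinal.{0}, IsKappaClub κ C ∧ C ⊆ S)
    (T : Set (Set (Ordinal.{0} × Ordinal.{0}))) (hT : ∀ g ∈ T, IsOrdFun κ g)
    (f : Set (Ordinal.{0} × Ordinal.{0}) → Set (Ordinal.{0} × Ordinal.{0}))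
    (hfT : ∀ g ∈ TStree κ S, f g ∈ T)
    (hfmono : ∀ g ∈ TStree κ S, ∀ h ∈ TStree κ S, g ⊂ h → f g ⊂ f h) :
    ∃ c ⊆ T, IsChain (· ⊆ ·) c ∧ #c = Cardinal.lift.{1} (Order.succ κ) := by
  obtain ⟨C, ⟨hCsub, hCunb, hCcl⟩, hCS⟩ := hclub
  set lam := (Order.succ κ).ord with hlam
  have hsreg : (Order.succ κ).IsRegular := Cardinal.isRegular_succ hκ
  have hκs : ℵ₀ ≤ Order.succ κ := hκ.trans (Order.le_succ κ)
  have hlim : Order.IsSuccLimit lam := Cardinal.isSuccLimit_ord hκs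
  set C' := C ∪ Ici lam with hC'
  have hC'unb : ¬ BddAbove C' := by
    rintro ⟨b, hb⟩
    have h1 : max lam (b + 1) ∈ C' := Or.inr (Set.mem_Ici.2 (le_max_left _ _))
    have h2 := hb h1
    have h3 : b + 1 ≤ b := (le_max_right lam (b + 1)).trans h2
    exact absurd h3 (by simp)
  set e := Ordinal.enumOrd C' with he
  have hemono : StrictMono e := Ordinal.enumOrd_strictMono hC'unb
  have hcof : lam.cof = Order.succ κ := hsreg.cof_eq
  have helt : ∀ α < lam, e α < lam := by
    intro α
    induction α using Ordinal.induction with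
    | _ α IH =>
      intro hα
      have hbsup : Ordinal.bsup α (fun β _ => e β) < lam := by
        apply Ordinal.bsup_lt_ord ?_ (fun β hβ => IH β hβ (hβ.trans hα))
        rw [hcof]; exact Cardinal.lt_ord.1 hα
      obtain ⟨β, hβC, hβgt⟩ := hCunb _ hbsup
      have hle : e α ≤ β := Ordinal.enumOrd_le_of_forall_lt (Or.inl hβC)
        (fun γ hγ => (Ordinal.le_bsup (fun β _ => e β) γ hγ).trans_lt hβgt)
      exact hle.trans_lt (hCsub hβC)
  have heC : ∀ α < lam, e α ∈ C := by
    intro α hα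
    rcases Ordinal.enumOrd_mem hC'unb α with h | h
    · exact h
    · exact absurd (helt α hα) (not_lt.2 h)
  have hecont : ∀ ξ < lam, ξ.cof = κ → e ξ = sSup (e '' Iio ξ) := by
    intro ξ hξ hξcof
    have hξlim : Order.IsSuccLimit ξ := Ordinal.aleph0_le_cof.1 (by rw [hξcof]; exact hκ)
    set s := sSup (e '' Iio ξ) with hs
    have hne : (e '' Iio ξ).Nonempty := ⟨e 0, 0, hξlim.pos, rfl⟩
    have hbdd : BddAbove (e '' Iio ξ) := Ordinal.bddAbove_of_small
    have hmem : ∀ η < ξ, e η ≤ s := fun η hη => le_csSup hbdd ⟨η, hη, rfl⟩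
    have hlt : ∀ η < ξ, e η < s := fun η hη =>
      (hemono (Order.lt_succ η)).trans_le (hmem _ (hξlim.succ_lt hη))
    have hslam : s < lam := by
      have hb2 : Ordinal.bsup ξ (fun η _ => e η) < lam := by
        apply Ordinal.bsup_lt_ord ?_ (fun η hη => helt η (hη.trans hξ))
        rw [hcof]; exact Cardinal.lt_ord.1 hξ
      refine lt_of_le_of_lt (csSup_le hne ?_) hb2
      rintro _ ⟨η, hη, rfl⟩
      exact Ordinal.le_bsup (fun η _ => e η) η hη
    have hscof : s.cof = κ := by
      rw [hs, Statement6Aux.cof_sSup_image hemono hξlim, hξcof]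
    have hsC : s ∈ C := by
      apply hCcl s hslam hscof
      intro β hβ
      obtain ⟨_, ⟨η, hη, rfl⟩, hgt⟩ := exists_lt_of_lt_csSup hne hβ
      exact ⟨e η, heC η (hη.trans hξ), hgt, hlt η hη⟩
    apply le_antisymm
    · exact Ordinal.enumOrd_le_of_forall_lt (Or.inl hsC) (fun η hη => hlt η hη)
    · exact csSup_le hne (by rintro _ ⟨η, hη, rfl⟩; exact (hemono hη).le)
  set G : Ordinal.{0} → Set (Ordinal.{0} × Ordinal.{0}) :=
    fun α => {p | p.1 ≤ α ∧ p.2 = e p.1} with hGdef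
  have hGtree : ∀ α < lam, G α ∈ TStree κ S := by
    intro α hα
    refine ⟨Order.succ α, hlim.succ_lt hα, ⟨α, rfl⟩, ?_, ?_, ?_, ?_, ?_⟩
    · rintro ⟨x1, x2⟩ ⟨h1, _⟩
      exact Order.lt_succ_iff.2 h1
    · intro ξ hξ
      exact ⟨e ξ, ⟨Order.lt_succ_iff.1 hξ, rfl⟩, fun β hβ => hβ.2⟩
    · rintro ⟨x1, x2⟩ ⟨h1, h2⟩
      simp only at h2
      rw [h2]
      exact hCS (heC x1 (h1.trans_lt hα))
    · rintro ξ β η β' ⟨h1, h2⟩ ⟨h3, h4⟩ hlt'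
      simp only at h2 h4
      rw [h2, h4]
      exact hemono hlt'
    · rintro ξ β ⟨h1, h2⟩ hξcof
      simp only at h1 h2
      have hset : {β' | ∃ η < ξ, (η, β') ∈ G α} = e '' Iio ξ := by
        ext β'
        constructor
        · rintro ⟨η, hη, _, h⟩
          exact ⟨η, hη, h.symm⟩
        · rintro ⟨η, hη, rfl⟩
          exact ⟨η, hη, le_of_lt (hη.trans_le h1), rfl⟩
      rw [h2, hset]
      exact hecont ξ (h1.trans_lt hα) hξcof
  have hGmono : ∀ {α β : Ordinal.{0}}, α < β → G α ⊂ G β := by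
    intro α β hab
    constructor
    · rintro ⟨x1, x2⟩ ⟨h1, h2⟩
      exact ⟨h1.trans hab.le, h2⟩
    · intro hsub
      have hmem : (β, e β) ∈ G α := hsub ⟨le_refl β, rfl⟩
      exact absurd hmem.1 (not_le.2 hab)
  refine ⟨(fun α => f (G α)) '' Iio lam, ?_, ?_, ?_⟩
  · rintro _ ⟨α, hα, rfl⟩
    exact hfT _ (hGtree α hα)
  · rintro _ ⟨α, hα, rfl⟩ _ ⟨β, hβ, rfl⟩ hne
    rcases lt_trichotomy α β with h | h | h
    · exact Or.inl (hfmono _ (hGtree α hα) _ (hGtree β hβ) (hGmono h)).subset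
    · exact absurd (by rw [h]) hne
    · exact Or.inr (hfmono _ (hGtree β hβ) _ (hGtree α hα) (hGmono h)).subset
  · have hinj : Set.InjOn (fun α => f (G α)) (Iio lam) := by
      intro α hα β hβ hfe
      by_contra hne
      rcases lt_or_gt_of_ne hne with h | h
      · exact (hfmono _ (hGtree α hα) _ (hGtree β hβ) (hGmono h)).ne hfe
      · exact (hfmono _ (hGtree β hβ) _ (hGtree α hα) (hGmono h)).ne hfe.symm
    rw [Cardinal.mk_image_eq_of_injOn _ _ hinj, Ordinal.mk_Iio_ordinal, Cardinal.card_ord]
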